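/- arXiv:1806.06747 — 6 statements merged into one kernel-verified Lean document; each statement's English description precedes it below -/
import Mathlib

section
/- Let (X, d) be a complete metric space and let (x_α) be a net in X that is almost geodesic and bounded. Then (x_α) converges to some point x ∈ X. -/
open Filter Topology

theorem stmt_3 {X : Type*} [MetricSpace X] [CompleteSpace X] (b : X)
    {ι : Type*} [Nonempty ι] [SemilatticeSup ι] (x : ι → X)
    (halmost : ∀ ε > 0, ∃ A : ι, ∀ α α', A ≤ α → α ≤ α' →
      dist b (x α') ≥ dist b (x α) + dist (x α) (x α') - ε)
    (hbdd : ∃ M : ℝ, ∀ α, dist (x α) b ≤ M) :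
    ∃ x₀ : X, Tendsto x atTop (𝓝 x₀) := by
  obtain ⟨M, hM⟩ := hbdd
  have hcs : CauchySeq x := by
    rw [Metric.cauchySeq_iff]
    intro ε hε
    obtain ⟨A, hA⟩ := halmost (ε/6) (by linarith)
    set S : Set ℝ := (fun α => dist b (x α)) '' {α | A ≤ α} with hS
    have hSne : S.Nonempty := ⟨dist b (x A), A, le_refl A, rfl⟩
    have hSbdd : BddAbove S := ⟨M, by rintro y ⟨α, -, rfl⟩; simpa [dist_comm] using hM α⟩
    set L := sSup S with hL
    obtain ⟨y, ⟨β, hβA, rfl⟩, hy⟩ :=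
      exists_lt_of_lt_csSup hSne (show L - ε/6 < L by linarith)
    have key : ∀ α α', β ≤ α → α ≤ α' → dist (x α) (x α') < ε/2 := by
      intro α α' hα hαα'
      have h1 := hA α α' (le_trans hβA hα) hαα'
      have h2 := hA β α hβA hα
      have h3 : dist b (x α') ≤ L :=
        le_csSup hSbdd ⟨α', le_trans hβA (le_trans hα hαα'), rfl⟩
      have h4 : (0:ℝ) ≤ dist (x β) (x α) := dist_nonneg
      linarith
    refine ⟨β, fun m hm n hn => ?_⟩
    have h1 := key m (m ⊔ n) hm le_sup_left
    have h2 := key n (m ⊔ n) hn le_sup_right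
    have h3 : dist (x m) (x n) ≤ dist (x m) (x (m ⊔ n)) + dist (x (m ⊔ n)) (x n) :=
      dist_triangle _ _ _
    rw [dist_comm (x (m ⊔ n))] at h3
    linarith
  exact cauchySeq_tendsto_of_complete hcs
end

section
/- Let H be a real Hilbert space and V = ℝ ⊕ H, with the open cone V₊ = {(λ, x) ∈ V : ‖x‖ < λ} and the partial order u ≤ v iff v − u lies in the closure of V₊. For (μ, x), (γ, y) ∈ V₊, the gauge M((μ,x)/(γ,y)) = inf{β > 0 : (μ,x) ≤ β(γ,y)} equals (γμ − ⟨x,y⟩ + √((γμ − ⟨x,y⟩)² − (μ² − ‖x‖²)(γ² − ‖y‖²))) / (γ² − ‖y‖²). -/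
open RealInnerProductSpace

private lemma gauge_aux_lb (γ μ i m n w s : ℝ) (hγ0 : 0 < γ) (ha : 0 < γ ^ 2 - m ^ 2)
    (hw0 : 0 ≤ w) (hw2 : w ^ 2 = μ ^ 2 * m ^ 2 - 2 * μ * γ * i + γ ^ 2 * n ^ 2)
    (hs0 : 0 ≤ s) (hs2 : s ^ 2 = (γ * μ - i) ^ 2 - (μ ^ 2 - n ^ 2) * (γ ^ 2 - m ^ 2)) :
    μ * (γ ^ 2 - m ^ 2) ≤ (γ * μ - i + s) * γ := by
  have hident : s ^ 2 * γ ^ 2 =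
      ((γ ^ 2 - m ^ 2) * μ - (γ * μ - i) * γ) ^ 2 + (γ ^ 2 - m ^ 2) * w ^ 2 := by
    rw [hs2, hw2]; ring
  nlinarith [hident, mul_nonneg ha.le (sq_nonneg w), mul_nonneg hs0 hγ0.le]

private lemma gauge_aux_mem (γ μ i m n s β : ℝ) (hγ0 : 0 < γ) (ha : 0 < γ ^ 2 - m ^ 2)
    (hs0 : 0 ≤ s) (hs2 : s ^ 2 = (γ * μ - i) ^ 2 - (μ ^ 2 - n ^ 2) * (γ ^ 2 - m ^ 2))
    (hlb : μ * (γ ^ 2 - m ^ 2) ≤ (γ * μ - i + s) * γ)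
    (haβb : γ * μ - i + s ≤ (γ ^ 2 - m ^ 2) * β) :
    0 ≤ β * γ - μ ∧ β ^ 2 * m ^ 2 - 2 * β * i + n ^ 2 ≤ (β * γ - μ) ^ 2 := by
  have hP : 0 ≤ β * γ - μ := by
    nlinarith [mul_le_mul_of_nonneg_right haβb hγ0.le]
  refine ⟨hP, ?_⟩
  have hq' : 0 ≤ ((γ ^ 2 - m ^ 2) * β - (γ * μ - i)) ^ 2 - s ^ 2 := by
    linarith [mul_nonneg (show (0:ℝ) ≤ (γ ^ 2 - m ^ 2) * β - (γ * μ - i) - s by linarith)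
      (show (0:ℝ) ≤ (γ ^ 2 - m ^ 2) * β - (γ * μ - i) + s by linarith)]
  nlinarith [hq', hs2, ha]

private lemma gauge_aux_main (γ μ i m n r w s β : ℝ)
    (hm : 0 ≤ m) (hn : 0 ≤ n) (hxx : n < μ) (hyy : m < γ)
    (hCS2 : i ^ 2 ≤ n ^ 2 * m ^ 2)
    (hr0 : 0 ≤ r) (hr2 : r ^ 2 = β ^ 2 * m ^ 2 - 2 * β * i + n ^ 2)
    (hβle : r ≤ β * γ - μ)
    (hw0 : 0 ≤ w) (hw2 : w ^ 2 = μ ^ 2 * m ^ 2 - 2 * μ * γ * i + γ ^ 2 * n ^ 2)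
    (hs0 : 0 ≤ s) (hs2 : s ^ 2 = (γ * μ - i) ^ 2 - (μ ^ 2 - n ^ 2) * (γ ^ 2 - m ^ 2)) :
    γ * μ - i + s ≤ (γ ^ 2 - m ^ 2) * β := by
  have hμ0 : 0 < μ := lt_of_le_of_lt hn hxx
  have hγ0 : 0 < γ := lt_of_le_of_lt hm hyy
  have ha : 0 < γ ^ 2 - m ^ 2 := by nlinarith
  have hP : 0 ≤ β * γ - μ := le_trans hr0 hβle
  have hq : 0 ≤ (γ ^ 2 - m ^ 2) * β ^ 2 - 2 * (γ * μ - i) * β + (μ ^ 2 - n ^ 2) := by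
    linarith [mul_nonneg (show (0:ℝ) ≤ β * γ - μ - r by linarith)
      (show (0:ℝ) ≤ β * γ - μ + r by linarith), hr2]
  have hsq : s ^ 2 ≤ ((γ ^ 2 - m ^ 2) * β - (γ * μ - i)) ^ 2 := by
    linarith [mul_nonneg ha.le hq, hs2]
  have habs : s ≤ |(γ ^ 2 - m ^ 2) * β - (γ * μ - i)| := by
    rw [← Real.sqrt_sq hs0, ← Real.sqrt_sq_eq_abs]
    exact Real.sqrt_le_sqrt hsq
  by_cases hcase : γ * μ - i ≤ (γ ^ 2 - m ^ 2) * β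
  · rw [abs_of_nonneg (by linarith)] at habs
    linarith
  · push_neg at hcase
    exfalso
    have h1 : s ≤ (γ * μ - i) - (γ ^ 2 - m ^ 2) * β := by
      rw [abs_of_nonpos (by linarith)] at habs
      linarith
    have h2 : μ ≤ β * γ := by linarith
    have hsγ : 0 ≤ s * γ := mul_nonneg hs0 hγ0.le
    have h3 : (γ ^ 2 - m ^ 2) * μ ≤ (γ ^ 2 - m ^ 2) * (β * γ) :=
      mul_le_mul_of_nonneg_left h2 ha.le
    have h4 : (γ ^ 2 - m ^ 2) * β * γ ≤ ((γ * μ - i) - s) * γ :=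
      by linarith [mul_le_mul_of_nonneg_right
          (show (γ ^ 2 - m ^ 2) * β ≤ (γ * μ - i) - s by linarith) hγ0.le]
    have hneg : (γ ^ 2 - m ^ 2) * μ - (γ * μ - i) * γ ≤ -(s * γ) := by linarith [h3, h4]
    have hX2 : (s * γ) * (s * γ) ≤
        ((γ * μ - i) * γ - (γ ^ 2 - m ^ 2) * μ) * ((γ * μ - i) * γ - (γ ^ 2 - m ^ 2) * μ) :=
      mul_le_mul (by linarith) (by linarith) hsγ (by linarith)
    have hident : s ^ 2 * γ ^ 2 =
        ((γ ^ 2 - m ^ 2) * μ - (γ * μ - i) * γ) ^ 2 + (γ ^ 2 - m ^ 2) * w ^ 2 := by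
      rw [hs2, hw2]; ring
    have h5 : (γ ^ 2 - m ^ 2) * w ^ 2 ≤ 0 := by linarith [hident, hX2]
    have hwsq : w ^ 2 = 0 :=
      le_antisymm (le_of_mul_le_mul_left
        (show (γ ^ 2 - m ^ 2) * w ^ 2 ≤ (γ ^ 2 - m ^ 2) * 0 by linarith [h5]) ha)
        (sq_nonneg w)
    have hXsq : ((γ ^ 2 - m ^ 2) * μ - (γ * μ - i) * γ + s * γ) *
        ((γ ^ 2 - m ^ 2) * μ - (γ * μ - i) * γ - s * γ) = 0 := by
      linear_combination (-1 : ℝ) * hident - (γ ^ 2 - m ^ 2) * hwsq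
    have h6 : (γ ^ 2 - m ^ 2) * μ - (γ * μ - i) * γ = -(s * γ) := by
      refine le_antisymm hneg ?_
      by_contra hcon
      push_neg at hcon
      have hlt2 : (γ ^ 2 - m ^ 2) * μ - (γ * μ - i) * γ - s * γ < 0 := by linarith
      have := mul_pos_of_neg_of_neg (show (γ ^ 2 - m ^ 2) * μ - (γ * μ - i) * γ + s * γ < 0
        by linarith) hlt2
      linarith
    have h7 : β * γ = μ :=
      le_antisymm (le_of_mul_le_mul_left
        (show (γ ^ 2 - m ^ 2) * (β * γ) ≤ (γ ^ 2 - m ^ 2) * μ by linarith [h4, h6]) ha) h2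
    have hr00 : r = 0 := le_antisymm (by linarith) hr0
    have hrr : β ^ 2 * m ^ 2 - 2 * β * i + n ^ 2 = 0 := by rw [← hr2, hr00]; norm_num
    have h8' : m ^ 2 * (β ^ 2 * m ^ 2 - 2 * β * i + n ^ 2) = 0 := by rw [hrr]; ring
    have h8 : (i - β * m ^ 2) ^ 2 ≤ 0 := by linarith [hCS2, h8']
    have h9 : γ * μ = β * γ ^ 2 := by rw [← h7]; ring
    have hlt : i < β * m ^ 2 := by linarith [hcase, h9]
    linarith [mul_pos (sub_pos.2 hlt) (sub_pos.2 hlt), h8]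

set_option maxHeartbeats 1000000 in
theorem stmt_4 {H : Type*} [NormedAddCommGroup H] [InnerProductSpace ℝ H] [CompleteSpace H]
    (μ γ : ℝ) (x y : H) (hx : ‖x‖ < μ) (hy : ‖y‖ < γ) :
    sInf {β : ℝ | 0 < β ∧ ‖β • y - x‖ ≤ β * γ - μ} =
      (γ * μ - ⟪x, y⟫ +
        Real.sqrt ((γ * μ - ⟪x, y⟫) ^ 2 - (μ ^ 2 - ‖x‖ ^ 2) * (γ ^ 2 - ‖y‖ ^ 2))) /
        (γ ^ 2 - ‖y‖ ^ 2) := by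
  have hn : 0 ≤ ‖x‖ := norm_nonneg x
  have hm : 0 ≤ ‖y‖ := norm_nonneg y
  have hμ0 : 0 < μ := lt_of_le_of_lt hn hx
  have hγ0 : 0 < γ := lt_of_le_of_lt hm hy
  set i := ⟪x, y⟫ with hi_def
  have key : ∀ β : ℝ, ‖β • y - x‖ ^ 2 = β ^ 2 * ‖y‖ ^ 2 - 2 * β * i + ‖x‖ ^ 2 := by
    intro β
    rw [norm_sub_sq_real, norm_smul, real_inner_smul_left, real_inner_comm,
      mul_pow, Real.norm_eq_abs, sq_abs, hi_def]
    ring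
  have hw2 : ‖μ • y - γ • x‖ ^ 2 = μ ^ 2 * ‖y‖ ^ 2 - 2 * μ * γ * i + γ ^ 2 * ‖x‖ ^ 2 := by
    rw [norm_sub_sq_real, norm_smul, norm_smul, real_inner_smul_left,
      real_inner_smul_right, real_inner_comm, mul_pow, mul_pow,
      Real.norm_eq_abs, Real.norm_eq_abs, sq_abs, sq_abs, hi_def]
    ring
  have hCS : |i| ≤ ‖x‖ * ‖y‖ := abs_real_inner_le_norm x y
  clear_value i
  obtain ⟨hCSl, hCSr⟩ := abs_le.mp hCS
  have hCS2 : i ^ 2 ≤ ‖x‖ ^ 2 * ‖y‖ ^ 2 := by nlinarith [abs_nonneg i, sq_abs i]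
  have ha : 0 < γ ^ 2 - ‖y‖ ^ 2 := by nlinarith
  have hD : 0 ≤ (γ * μ - i) ^ 2 - (μ ^ 2 - ‖x‖ ^ 2) * (γ ^ 2 - ‖y‖ ^ 2) := by
    have hp : ‖x‖ * ‖y‖ < γ * μ := by nlinarith
    have h1 : 0 ≤ (γ * μ - i) ^ 2 - (γ * μ - ‖x‖ * ‖y‖) ^ 2 := by nlinarith
    nlinarith [sq_nonneg (μ * ‖y‖ - ‖x‖ * γ)]
  set s := Real.sqrt ((γ * μ - i) ^ 2 - (μ ^ 2 - ‖x‖ ^ 2) * (γ ^ 2 - ‖y‖ ^ 2)) with hs_def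
  have hs0 : 0 ≤ s := Real.sqrt_nonneg _
  have hs2 : s ^ 2 = (γ * μ - i) ^ 2 - (μ ^ 2 - ‖x‖ ^ 2) * (γ ^ 2 - ‖y‖ ^ 2) :=
    Real.sq_sqrt hD
  clear_value s
  have hlb : μ * (γ ^ 2 - ‖y‖ ^ 2) ≤ (γ * μ - i + s) * γ :=
    gauge_aux_lb γ μ i ‖y‖ ‖x‖ ‖μ • y - γ • x‖ s hγ0 ha (norm_nonneg _) hw2 hs0 hs2
  have hβpos : 0 < (γ * μ - i + s) / (γ ^ 2 - ‖y‖ ^ 2) := by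
    apply div_pos _ ha
    nlinarith [hlb, mul_pos hμ0 ha]
  have hset : {β : ℝ | 0 < β ∧ ‖β • y - x‖ ≤ β * γ - μ} =
      Set.Ici ((γ * μ - i + s) / (γ ^ 2 - ‖y‖ ^ 2)) := by
    ext β
    simp only [Set.mem_setOf_eq, Set.mem_Ici]
    constructor
    · rintro ⟨hβ0, hβle⟩
      rw [div_le_iff₀ ha]
      have := gauge_aux_main γ μ i ‖y‖ ‖x‖ ‖β • y - x‖ ‖μ • y - γ • x‖ s β
        hm hn hx hy hCS2 (norm_nonneg _) (key β) hβle (norm_nonneg _) hw2 hs0 hs2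
      linarith
    · intro hβ
      have hβ0 : 0 < β := lt_of_lt_of_le hβpos hβ
      have haβb : γ * μ - i + s ≤ (γ ^ 2 - ‖y‖ ^ 2) * β := by
        rw [div_le_iff₀ ha] at hβ
        linarith
      obtain ⟨hP, hq⟩ := gauge_aux_mem γ μ i ‖y‖ ‖x‖ s β hγ0 ha hs0 hs2 hlb haβb
      refine ⟨hβ0, ?_⟩
      have h2 : ‖β • y - x‖ ^ 2 ≤ (β * γ - μ) ^ 2 := by rw [key β]; exact hq
      exact (pow_le_pow_iff_left₀ (norm_nonneg _) hP two_ne_zero).mp h2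
  rw [hset]
  exact csInf_Ici
end

section
/- Let H be a real Hilbert space, let (x_α) be a net in the open unit ball of H converging weakly to x̂ with ‖x_α‖ → r, where ‖x̂‖ ≤ r ≤ 1, and let y ∈ H with ‖y‖ < 1. Then i((1,x_α))((1,y)) := d_h((1,x_α),(1,y)) − d_h((1,x_α),(1,0)) converges to log((1 − ⟨x̂,y⟩ + √((1 − ⟨x̂,y⟩)² − (1 − ‖y‖²)(1 − r²))) / ((1 + r)√(1 − ‖y‖²))). -/
open Filter Topology RealInnerProductSpace

noncomputable def dh {H : Type*} [NormedAddCommGroup H] [InnerProductSpace ℝ H]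
    (x y : H) : ℝ :=
  Real.log ((1 - ⟪x, y⟫ + Real.sqrt ((1 - ⟪x, y⟫) ^ 2 - (1 - ‖x‖ ^ 2) * (1 - ‖y‖ ^ 2))) /
    (Real.sqrt (1 - ‖x‖ ^ 2) * Real.sqrt (1 - ‖y‖ ^ 2)))

theorem stmt_11 {H : Type*} [NormedAddCommGroup H] [InnerProductSpace ℝ H] [CompleteSpace H]
    {ι : Type*} [Nonempty ι] [SemilatticeSup ι]
    (x : ι → H) (hx : ∀ α, ‖x α‖ < 1) (xhat : H) (r : ℝ)
    (hr : ‖xhat‖ ≤ r) (hr1 : r ≤ 1)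
    (hweak : ∀ z : H, Tendsto (fun α => ⟪z, x α⟫) atTop (𝓝 ⟪z, xhat⟫))
    (hnorm : Tendsto (fun α => ‖x α‖) atTop (𝓝 r))
    (y : H) (hy : ‖y‖ < 1) :
    Tendsto (fun α => dh (x α) y - dh (x α) (0 : H)) atTop
      (𝓝 (Real.log ((1 - ⟪xhat, y⟫ +
        Real.sqrt ((1 - ⟪xhat, y⟫) ^ 2 - (1 - ‖y‖ ^ 2) * (1 - r ^ 2))) /
        ((1 + r) * Real.sqrt (1 - ‖y‖ ^ 2))))) := by
  have hy0 : (0:ℝ) ≤ ‖y‖ := norm_nonneg _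
  have hy2 : (0:ℝ) < 1 - ‖y‖ ^ 2 := by nlinarith
  have ht : 0 < Real.sqrt (1 - ‖y‖ ^ 2) := Real.sqrt_pos.2 hy2
  have hr0 : 0 ≤ r := (norm_nonneg _).trans hr
  have hip : Tendsto (fun α => ⟪x α, y⟫) atTop (𝓝 ⟪xhat, y⟫) := by
    simpa [real_inner_comm] using hweak y
  have hipα : ∀ α, (0:ℝ) < 1 - ⟪x α, y⟫ := by
    intro α
    have h1 := real_inner_le_norm (x α) y
    nlinarith [hx α, norm_nonneg (x α)]
  have hiphat : (0:ℝ) < 1 - ⟪xhat, y⟫ := by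
    have h1 := real_inner_le_norm xhat y
    nlinarith [norm_nonneg xhat]
  set t := Real.sqrt (1 - ‖y‖ ^ 2) with ht_def
  set L : ℝ := 1 - ⟪xhat, y⟫ +
      Real.sqrt ((1 - ⟪xhat, y⟫) ^ 2 - (1 - ‖y‖ ^ 2) * (1 - r ^ 2)) with hL
  have hLpos : 0 < L := add_pos_of_pos_of_nonneg hiphat (Real.sqrt_nonneg _)
  have key : ∀ α, dh (x α) y - dh (x α) 0 =
      Real.log (1 - ⟪x α, y⟫ +
        Real.sqrt ((1 - ⟪x α, y⟫) ^ 2 - (1 - ‖x α‖ ^ 2) * (1 - ‖y‖ ^ 2)))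
        - Real.log t - Real.log (1 + ‖x α‖) := by
    intro α
    have hn : 0 ≤ ‖x α‖ := norm_nonneg _
    have hs : 0 < Real.sqrt (1 - ‖x α‖ ^ 2) :=
      Real.sqrt_pos.2 (by nlinarith [hx α])
    have hA : 0 < 1 - ⟪x α, y⟫ +
        Real.sqrt ((1 - ⟪x α, y⟫) ^ 2 - (1 - ‖x α‖ ^ 2) * (1 - ‖y‖ ^ 2)) :=
      add_pos_of_pos_of_nonneg (hipα α) (Real.sqrt_nonneg _)
    have h0 : dh (x α) (0:H) = Real.log ((1 + ‖x α‖) / Real.sqrt (1 - ‖x α‖ ^ 2)) := by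
      have e1 : (1 - ⟪x α, (0:H)⟫) ^ 2 - (1 - ‖x α‖ ^ 2) * (1 - ‖(0:H)‖ ^ 2) = ‖x α‖ ^ 2 := by
        simp only [inner_zero_right, norm_zero]; ring
      have e2 : Real.sqrt (1 - ‖(0:H)‖ ^ 2) = 1 := by simp
      rw [dh, e1, e2, Real.sqrt_sq hn]
      simp [inner_zero_right]
    rw [dh, h0, Real.log_div hA.ne' (by positivity), Real.log_div (by positivity) hs.ne',
      Real.log_mul hs.ne' ht.ne']
    ring
  have hgoal : Real.log (L / ((1 + r) * t)) = Real.log L - Real.log t - Real.log (1 + r) := by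
    rw [Real.log_div hLpos.ne' (by positivity), Real.log_mul (by positivity) ht.ne']
    ring
  have h1 : Tendsto (fun α => (1 - ⟪x α, y⟫) ^ 2 - (1 - ‖x α‖ ^ 2) * (1 - ‖y‖ ^ 2)) atTop
      (𝓝 ((1 - ⟪xhat, y⟫) ^ 2 - (1 - ‖y‖ ^ 2) * (1 - r ^ 2))) := by
    have h2 : Tendsto (fun α => (1 - ⟪x α, y⟫) ^ 2 - (1 - ‖x α‖ ^ 2) * (1 - ‖y‖ ^ 2)) atTop
        (𝓝 ((1 - ⟪xhat, y⟫) ^ 2 - (1 - r ^ 2) * (1 - ‖y‖ ^ 2))) :=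
      ((tendsto_const_nhds.sub hip).pow 2).sub
        ((tendsto_const_nhds.sub (hnorm.pow 2)).mul tendsto_const_nhds)
    convert h2 using 2
    ring
  have hAtend : Tendsto (fun α => 1 - ⟪x α, y⟫ +
      Real.sqrt ((1 - ⟪x α, y⟫) ^ 2 - (1 - ‖x α‖ ^ 2) * (1 - ‖y‖ ^ 2))) atTop (𝓝 L) :=
    (tendsto_const_nhds.sub hip).add h1.sqrt
  simp only [key]
  rw [hgoal]
  refine Tendsto.sub (Tendsto.sub ?_ tendsto_const_nhds) ?_
  · exact (Real.continuousAt_log hLpos.ne').tendsto.comp hAtend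
  · exact (Real.continuousAt_log (by positivity)).tendsto.comp (tendsto_const_nhds.add hnorm)
end

section
/- Let H be a real Hilbert space, x̂ ∈ H with ‖x̂‖ = 1, and set x_n = (1 − 1/n) x̂ for n ≥ 1. Then for every y in the open unit ball of H, d_h((1,x_n),(1,y)) − d_h((1,x_n),(1,0)) converges to the Busemann function ξ((1,y)) = log((1 − ⟨x̂,y⟩)/√(1 − ‖y‖²)). -/
open Filter Topology RealInnerProductSpace

theorem stmt_13 {H : Type*} [NormedAddCommGroup H] [InnerProductSpace ℝ H] [CompleteSpace H]
    (xhat : H) (hxhat : ‖xhat‖ = 1) (y : H) (hy : ‖y‖ < 1) :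
    Tendsto (fun n : ℕ => dh ((1 - 1 / (n : ℝ)) • xhat) y - dh ((1 - 1 / (n : ℝ)) • xhat) (0 : H))
      atTop (𝓝 (Real.log ((1 - ⟪xhat, y⟫) / Real.sqrt (1 - ‖y‖ ^ 2)))) := by
  set a : ℝ := ⟪xhat, y⟫ with ha
  have hay : |a| ≤ ‖y‖ := by
    calc |a| ≤ ‖xhat‖ * ‖y‖ := abs_real_inner_le_norm xhat y
    _ = ‖y‖ := by rw [hxhat, one_mul]
  have ha1 : |a| < 1 := lt_of_le_of_lt hay hy
  have ha1' : a < 1 := lt_of_le_of_lt (le_abs_self a) ha1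
  have ha1'' : (0:ℝ) < 1 - a := by linarith
  have hs2 : (0:ℝ) < 1 - ‖y‖ ^ 2 := by nlinarith [norm_nonneg y]
  have hsq : 0 < Real.sqrt (1 - ‖y‖ ^ 2) := Real.sqrt_pos.mpr hs2
  set num : ℝ → ℝ :=
    fun t => 1 - t * a + Real.sqrt ((1 - t * a) ^ 2 - (1 - t ^ 2) * (1 - ‖y‖ ^ 2)) with hnum
  set G : ℝ → ℝ :=
    fun t => Real.log (num t) - Real.log (1 + t) - Real.log (Real.sqrt (1 - ‖y‖ ^ 2)) with hG
  have hnumpos : ∀ t : ℝ, 0 ≤ t → t ≤ 1 → 0 < num t := by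
    intro t ht0 ht1
    have : t * a ≤ |t * a| := le_abs_self _
    have habs : |t * a| = t * |a| := by rw [abs_mul, abs_of_nonneg ht0]
    have : t * a < 1 := by nlinarith [abs_nonneg a]
    have := Real.sqrt_nonneg ((1 - t * a) ^ 2 - (1 - t ^ 2) * (1 - ‖y‖ ^ 2))
    simp only [hnum]
    linarith
  have hnum1 : num 1 = 2 * (1 - a) := by
    simp only [hnum]
    have h1 : (1 - 1 * a) ^ 2 - (1 - 1 ^ 2) * (1 - ‖y‖ ^ 2) = (1 - a) ^ 2 := by ring
    rw [h1, Real.sqrt_sq (by linarith)]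
    ring
  have hnc : Continuous num := by
    simp only [hnum]; fun_prop
  have hcont : ContinuousAt G 1 := by
    apply ContinuousAt.sub
    apply ContinuousAt.sub
    · exact hnc.continuousAt.log (by rw [hnum1]; positivity)
    · exact (continuous_const.add continuous_id).continuousAt.log (by norm_num)
    · exact continuousAt_const
  have ht : Tendsto (fun n : ℕ => 1 - 1 / (n : ℝ)) atTop (𝓝 1) := by
    have h : Tendsto (fun n : ℕ => 1 / (n : ℝ)) atTop (𝓝 0) := tendsto_one_div_atTop_nhds_zero_nat
    have := (tendsto_const_nhds (x := (1:ℝ)) (f := atTop (α := ℕ))).sub h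
    simpa using this
  have hGlim : Tendsto (fun n : ℕ => G (1 - 1 / (n : ℝ))) atTop
      (𝓝 (Real.log ((1 - a) / Real.sqrt (1 - ‖y‖ ^ 2)))) := by
    have h := hcont.tendsto.comp ht
    have hval : G 1 = Real.log ((1 - a) / Real.sqrt (1 - ‖y‖ ^ 2)) := by
      simp only [hG, hnum1]
      rw [Real.log_mul (by norm_num) (by linarith), Real.log_div (by linarith) (ne_of_gt hsq)]
      have : Real.log (1 + 1) = Real.log 2 := by norm_num
      rw [this]; ring
    rw [hval] at h
    exact h
  refine hGlim.congr' ?_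
  filter_upwards [eventually_ge_atTop 2] with n hn
  have hn2 : (2:ℝ) ≤ (n:ℝ) := by exact_mod_cast hn
  set t : ℝ := 1 - 1 / (n : ℝ) with htdef
  have hinv : 0 < 1 / (n : ℝ) := by positivity
  have hinv2 : 1 / (n : ℝ) ≤ 1 / 2 := by
    apply one_div_le_one_div_of_le <;> linarith
  have ht0 : 0 ≤ t := by rw [htdef]; linarith
  have ht1 : t < 1 := by rw [htdef]; linarith
  have hA : 0 < Real.sqrt (1 - t ^ 2) := Real.sqrt_pos.mpr (by nlinarith)
  have hnorm : ‖t • xhat‖ = t := by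
    rw [norm_smul, hxhat, Real.norm_eq_abs, abs_of_nonneg ht0, mul_one]
  have hinner : ⟪t • xhat, y⟫ = t * a := by rw [real_inner_smul_left]
  have hd1 : dh (t • xhat) y =
      Real.log (num t) - (Real.log (Real.sqrt (1 - t ^ 2)) +
        Real.log (Real.sqrt (1 - ‖y‖ ^ 2))) := by
    rw [dh, hinner, hnorm]
    simp only [hnum]
    rw [Real.log_div (ne_of_gt (hnumpos t ht0 (le_of_lt ht1)))
      (by positivity), Real.log_mul (ne_of_gt hA) (ne_of_gt hsq)]
  have hd0 : dh (t • xhat) (0 : H) =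
      Real.log (1 + t) - Real.log (Real.sqrt (1 - t ^ 2)) := by
    rw [dh, inner_zero_right, hnorm, norm_zero]
    have h1 : (1 - (0:ℝ)) ^ 2 - (1 - t ^ 2) * (1 - (0:ℝ) ^ 2) = t ^ 2 := by ring
    have h2 : (1:ℝ) - (0:ℝ) ^ 2 = 1 := by norm_num
    rw [h1, h2, Real.sqrt_one, mul_one, Real.sqrt_sq ht0]
    rw [sub_zero, Real.log_div (by linarith) (ne_of_gt hA)]
  rw [hd1, hd0]
  simp only [hG]
  ring
end

section
/- Let H be a real Hilbert space. No almost geodesic net ((1, x_α)) in the Klein model (with base point (1,0)) can have i((1,x_α)) converging pointwise to a horofunction ξ with parameter ‖x̂‖ < 1, r = 1; that is, if (x_α) is a net in the open unit ball with ‖x_α‖ → 1 converging weakly to x̂ with ‖x̂‖ < 1, then (x_α) is not almost geodesic with respect to d_h and base point (1,0). -/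
open Filter Topology RealInnerProductSpace

lemma dh_zero {H : Type*} [NormedAddCommGroup H] [InnerProductSpace ℝ H] (y : H) :
    dh (0 : H) y = Real.log ((1 + ‖y‖) / Real.sqrt (1 - ‖y‖ ^ 2)) := by
  unfold dh
  have h1 : ((1 : ℝ) - ⟪(0:H), y⟫) ^ 2 - (1 - ‖(0:H)‖ ^ 2) * (1 - ‖y‖ ^ 2) = ‖y‖ ^ 2 := by
    simp [inner_zero_left]
  rw [h1, Real.sqrt_sq (norm_nonneg y)]
  simp [inner_zero_left]

set_option maxHeartbeats 1000000 in
theorem stmt_17 {H : Type*} [NormedAddCommGroup H] [InnerProductSpace ℝ H] [CompleteSpace H]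
    {ι : Type*} [Nonempty ι] [SemilatticeSup ι]
    (x : ι → H) (hx : ∀ α, ‖x α‖ < 1) (xhat : H) (hxhat : ‖xhat‖ < 1)
    (hweak : ∀ z : H, Tendsto (fun α => ⟪z, x α⟫) atTop (𝓝 ⟪z, xhat⟫))
    (hnorm : Tendsto (fun α => ‖x α‖) atTop (𝓝 1)) :
    ¬ (∀ ε > 0, ∃ A : ι, ∀ α α', A ≤ α → α ≤ α' →
        dh (0 : H) (x α') ≥ dh (0 : H) (x α) + dh (x α) (x α') - ε) := by
  intro h
  obtain ⟨A, hA⟩ := h 1 one_pos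
  set E : ℝ := Real.exp 1 with hE
  have hEpos : 0 < E := Real.exp_pos 1
  set δ : ℝ := (1 - ‖xhat‖) / (4 * E) with hδ
  have hδpos : 0 < δ := div_pos (by linarith) (by positivity)
  have hev : ∀ᶠ α in atTop, 1 - ‖x α‖ < δ := by
    have := hnorm.eventually (eventually_gt_nhds (show (1:ℝ) - δ < 1 by linarith))
    filter_upwards [this] with α hα
    linarith
  obtain ⟨α, hα, hαA⟩ := (hev.and (eventually_ge_atTop A)).exists
  -- key inequality for all α' ≥ α
  have key : ∀ α', α ≤ α' → 1 - ⟪x α, x α'⟫ ≤ 4 * E * (1 - ‖x α‖) := by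
    intro α' hle
    have hgeo := hA α α' hαA hle
    set u := x α
    set v := x α'
    have hnu : ‖u‖ < 1 := hx α
    have hnv : ‖v‖ < 1 := hx α'
    have hnu0 : (0:ℝ) ≤ ‖u‖ := norm_nonneg u
    have hnv0 : (0:ℝ) ≤ ‖v‖ := norm_nonneg v
    have hs : (0:ℝ) < 1 - ‖u‖ ^ 2 := by nlinarith
    have hs' : (0:ℝ) < 1 - ‖v‖ ^ 2 := by nlinarith
    set s := Real.sqrt (1 - ‖u‖ ^ 2) with hsdef
    set s' := Real.sqrt (1 - ‖v‖ ^ 2) with hs'def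
    have hspos : 0 < s := Real.sqrt_pos.mpr hs
    have hs'pos : 0 < s' := Real.sqrt_pos.mpr hs'
    have hssq : s ^ 2 = 1 - ‖u‖ ^ 2 := Real.sq_sqrt hs.le
    have ht : ⟪u, v⟫ < 1 := by
      have := real_inner_le_norm u v
      nlinarith
    set N := 1 - ⟪u, v⟫ + Real.sqrt ((1 - ⟪u, v⟫) ^ 2 - (1 - ‖u‖ ^ 2) * (1 - ‖v‖ ^ 2)) with hN
    have hNge : 1 - ⟪u, v⟫ ≤ N := by
      have := Real.sqrt_nonneg ((1 - ⟪u, v⟫) ^ 2 - (1 - ‖u‖ ^ 2) * (1 - ‖v‖ ^ 2))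
      linarith
    have hNpos : 0 < N := by linarith
    set a := (1 + ‖v‖) / s' with ha
    set b := (1 + ‖u‖) / s with hb
    set c := N / (s * s') with hc
    have hapos : 0 < a := div_pos (by linarith) hs'pos
    have hbpos : 0 < b := div_pos (by linarith) hspos
    have hcpos : 0 < c := div_pos hNpos (by positivity)
    have hlog : Real.log b + Real.log c - 1 ≤ Real.log a := by
      have e1 : dh (0 : H) v = Real.log a := by rw [dh_zero]
      have e2 : dh (0 : H) u = Real.log b := by rw [dh_zero]
      have e3 : dh u v = Real.log c := by unfold dh; rw [hc, hN, hsdef, hs'def]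
      rw [e1, e2, e3] at hgeo
      linarith
    have h2 : b * c ≤ E * a := by
      calc b * c = Real.exp (Real.log b + Real.log c) := by
            rw [Real.exp_add, Real.exp_log hbpos, Real.exp_log hcpos]
        _ ≤ Real.exp (Real.log a + 1) := Real.exp_le_exp.mpr (by linarith)
        _ = E * a := by rw [Real.exp_add, Real.exp_log hapos, hE]; ring
    have h3 : (1 + ‖u‖) * N ≤ E * (1 + ‖v‖) * (1 - ‖u‖ ^ 2) := by
      have h2' : b * c * (s ^ 2 * s') ≤ E * a * (s ^ 2 * s') :=
        mul_le_mul_of_nonneg_right h2 (by positivity)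
      have e1 : b * c * (s ^ 2 * s') = (1 + ‖u‖) * N := by
        rw [hb, hc]; field_simp
      have e2 : E * a * (s ^ 2 * s') = E * (1 + ‖v‖) * (1 - ‖u‖ ^ 2) := by
        rw [ha, ← hssq]; field_simp
      rw [e1, e2] at h2'
      exact h2'
    have h1u : (0:ℝ) < 1 + ‖u‖ := by linarith
    have h4 : N ≤ E * (1 + ‖v‖) * (1 - ‖u‖) := by nlinarith [h3, h1u]
    calc 1 - ⟪u, v⟫ ≤ N := hNge
      _ ≤ E * (1 + ‖v‖) * (1 - ‖u‖) := h4
      _ ≤ 4 * E * (1 - ‖u‖) := by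
          nlinarith [mul_nonneg (mul_nonneg hEpos.le (show (0:ℝ) ≤ 3 - ‖v‖ by linarith))
            (show (0:ℝ) ≤ 1 - ‖u‖ by linarith)]
  -- take the weak limit in α'
  have hlim : Tendsto (fun α' => 1 - ⟪x α, x α'⟫) atTop (𝓝 (1 - ⟪x α, xhat⟫)) :=
    (tendsto_const_nhds.sub (hweak (x α)))
  have hle : 1 - ⟪x α, xhat⟫ ≤ 4 * E * (1 - ‖x α‖) := by
    apply le_of_tendsto hlim
    filter_upwards [eventually_ge_atTop α] with α' h' using key α' h'
  have hCS : ⟪x α, xhat⟫ ≤ ‖xhat‖ := by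
    have h1 := real_inner_le_norm (x α) xhat
    have h2 : ‖x α‖ * ‖xhat‖ ≤ ‖xhat‖ := by
      nlinarith [hx α, norm_nonneg xhat, norm_nonneg (x α)]
    linarith
  have hbound : 4 * E * (1 - ‖x α‖) < 1 - ‖xhat‖ := by
    have : 4 * E * δ = 1 - ‖xhat‖ := by
      rw [hδ]; field_simp
    have h5 := mul_lt_mul_of_pos_left hα (show (0:ℝ) < 4 * E by positivity)
    linarith
  linarith
end

section
/- Let H be a real Hilbert space and 0 ≤ r ≤ 1, x̂ ∈ H with ‖x̂‖ ≤ r. Define ξ((1,y)) = log((1 − ⟨x̂,y⟩ + √((1 − ⟨x̂,y⟩)² − (1 − ‖y‖²)(1 − r²)))/((1 + r)√(1 − ‖y‖²))) for ‖y‖ < 1. If r = ‖x̂‖ < 1, then ξ((1,y)) = d_h((1,x̂),(1,y)) − d_h((1,x̂),(1,0)) for all y in the open unit ball; i.e., ξ is not a horofunction but an internal point of the horofunction compactification. -/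
open RealInnerProductSpace

theorem stmt_19 {H : Type*} [NormedAddCommGroup H] [InnerProductSpace ℝ H] [CompleteSpace H]
    (xhat : H) (r : ℝ) (hr0 : 0 ≤ r) (hr1 : r ≤ 1) (hrx : r = ‖xhat‖) (hxhat : ‖xhat‖ < 1) :
    ∀ y : H, ‖y‖ < 1 →
      Real.log ((1 - ⟪xhat, y⟫ +
          Real.sqrt ((1 - ⟪xhat, y⟫) ^ 2 - (1 - ‖y‖ ^ 2) * (1 - r ^ 2))) /
          ((1 + r) * Real.sqrt (1 - ‖y‖ ^ 2))) =
        dh xhat y - dh xhat (0 : H) := by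
  intro y hy
  subst hrx
  have hxn : 0 ≤ ‖xhat‖ := norm_nonneg xhat
  have hyn : 0 ≤ ‖y‖ := norm_nonneg y
  have hx2 : ‖xhat‖ ^ 2 < 1 := by nlinarith
  have hy2 : ‖y‖ ^ 2 < 1 := by nlinarith
  have hip : ⟪xhat, y⟫ < 1 :=
    lt_of_le_of_lt (real_inner_le_norm _ _) (by nlinarith)
  have ha : 0 < Real.sqrt (1 - ‖xhat‖ ^ 2) := Real.sqrt_pos.mpr (by linarith)
  have hb : 0 < Real.sqrt (1 - ‖y‖ ^ 2) := Real.sqrt_pos.mpr (by linarith)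
  have hA : 0 < 1 - ⟪xhat, y⟫ +
      Real.sqrt ((1 - ⟪xhat, y⟫) ^ 2 - (1 - ‖xhat‖ ^ 2) * (1 - ‖y‖ ^ 2)) := by
    have := Real.sqrt_nonneg ((1 - ⟪xhat, y⟫) ^ 2 - (1 - ‖xhat‖ ^ 2) * (1 - ‖y‖ ^ 2))
    linarith
  have hr : (0:ℝ) < 1 + ‖xhat‖ := by linarith
  -- compute dh xhat 0
  have h0 : dh xhat (0 : H) = Real.log ((1 + ‖xhat‖) / Real.sqrt (1 - ‖xhat‖ ^ 2)) := by
    unfold dh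
    simp only [inner_zero_right, norm_zero]
    rw [show ((1:ℝ)-0)^2 - (1 - ‖xhat‖ ^ 2) * (1 - (0:ℝ)^2) = ‖xhat‖ ^ 2 by ring,
      Real.sqrt_sq hxn]
    norm_num
  rw [h0]
  unfold dh
  rw [show (1 - ⟪xhat, y⟫) ^ 2 - (1 - ‖y‖ ^ 2) * (1 - ‖xhat‖ ^ 2)
      = (1 - ⟪xhat, y⟫) ^ 2 - (1 - ‖xhat‖ ^ 2) * (1 - ‖y‖ ^ 2) by ring]
  rw [Real.log_div (ne_of_gt hA) (by positivity),
      Real.log_div (ne_of_gt hA) (by positivity),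
      Real.log_div (by positivity) (ne_of_gt ha),
      Real.log_mul (ne_of_gt hr) (ne_of_gt hb),
      Real.log_mul (ne_of_gt ha) (ne_of_gt hb)]
  ring
end
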